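/- Fix T ∈ ℕ₊, λ > 0, a finite set X, a feature map ψ: X → ℝ^N, and a probability mass function P on X. Let G = Σ_{x∈X} P(x) ψ(x)ψ(x)ᵀ + (λ/T) I_N. Then for any z ∈ X, ψ(z)ᵀ G⁻¹ ψ(z) ≤ (T/λ) · E[ λ ψ(z)ᵀ (Σ_{i=1}^T ψ(x^{(i)})ψ(x^{(i)})ᵀ + λ I_N)⁻¹ ψ(z) ], where x^{(1)}, …, x^{(T)} are drawn i.i.d. from P. -/

import Mathlib

open Matrix Finset

namespace Stmt4Aux

variable {N : ℕ}

lemma sum_mulVec' {ι : Type*} (s : Finset ι) (f : ι → Matrix (Fin N) (Fin N) ℝ)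
    (v : Fin N → ℝ) : (∑ i ∈ s, f i) *ᵥ v = ∑ i ∈ s, f i *ᵥ v := by
  ext j
  simp only [mulVec, dotProduct, Matrix.sum_apply, Finset.sum_mul, Finset.sum_apply]
  rw [Finset.sum_comm]


lemma vecMulVec_mulVec' (v w u : Fin N → ℝ) :
    vecMulVec v w *ᵥ u = (w ⬝ᵥ u) • v := by
  ext j
  simp only [vecMulVec, mulVec, dotProduct, Pi.smul_apply, smul_eq_mul, Matrix.of_apply,
    Finset.mul_sum]
  rw [Finset.sum_mul]
  exact Finset.sum_congr rfl fun x _ => by ring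

lemma psd_vecMulVec (v : Fin N → ℝ) : (vecMulVec v v).PosSemidef := by
  refine Matrix.PosSemidef.of_dotProduct_mulVec_nonneg ?_ ?_
  · ext i j; simp [vecMulVec, mul_comm]
  · intro x
    have : star x ⬝ᵥ (vecMulVec v v *ᵥ x) = (v ⬝ᵥ x)^2 := by
      rw [vecMulVec_mulVec']
      simp [dotProduct_smul, smul_eq_mul, dotProduct_comm x v]
      ring
    rw [this]; positivity

lemma psd_smul {A : Matrix (Fin N) (Fin N) ℝ} (hA : A.PosSemidef) {c : ℝ} (hc : 0 ≤ c) :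
    (c • A).PosSemidef := by
  refine Matrix.PosSemidef.of_dotProduct_mulVec_nonneg ?_ ?_
  · unfold Matrix.IsHermitian
    rw [conjTranspose_smul, hA.1]
    simp
  · intro x
    rw [smul_mulVec, dotProduct_smul, smul_eq_mul]
    exact mul_nonneg hc (hA.dotProduct_mulVec_nonneg x)

lemma posDef_aux {ι : Type*} [Fintype ι] (c : ι → ℝ) (hc : ∀ i, 0 ≤ c i)
    (f : ι → Fin N → ℝ) (μ : ℝ) (hμ : 0 < μ) :
    (∑ i, c i • vecMulVec (f i) (f i) + μ • (1 : Matrix (Fin N) (Fin N) ℝ)).PosDef := by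
  have h1 : (∑ i, c i • vecMulVec (f i) (f i)).PosSemidef := by
    refine Finset.sum_induction _ _ (fun a b ha hb => ha.add hb) .zero ?_
    intro i _
    exact psd_smul (psd_vecMulVec (f i)) (hc i)
  have h2 : (μ • (1 : Matrix (Fin N) (Fin N) ℝ)).PosDef := by
    rw [smul_one_eq_diagonal]
    exact Matrix.PosDef.diagonal (fun _ => hμ)
  exact Matrix.PosDef.posSemidef_add h1 h2

lemma key {M : Matrix (Fin N) (Fin N) ℝ} (hM : M.PosDef) (p u : Fin N → ℝ) :
    2 * (u ⬝ᵥ p) - u ⬝ᵥ (M *ᵥ u) ≤ p ⬝ᵥ (M⁻¹ *ᵥ p) := by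
  set a := M⁻¹ *ᵥ p with ha
  have hdet : IsUnit M.det := hM.det_pos.ne'.isUnit
  have hMa : M *ᵥ a = p := by
    rw [ha, mulVec_mulVec, Matrix.mul_nonsing_inv _ hdet, one_mulVec]
  have hsymm : Mᵀ = M := hM.isHermitian
  have hcross : a ⬝ᵥ (M *ᵥ u) = p ⬝ᵥ u := by
    rw [dotProduct_mulVec, ← mulVec_transpose, hsymm, hMa]
  have h0 : 0 ≤ (a - u) ⬝ᵥ (M *ᵥ (a - u)) := by
    simpa using hM.posSemidef.dotProduct_mulVec_nonneg (a - u)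
  have hexp : (a - u) ⬝ᵥ (M *ᵥ (a - u))
      = p ⬝ᵥ a - 2 * (u ⬝ᵥ p) + u ⬝ᵥ (M *ᵥ u) := by
    rw [mulVec_sub, hMa, sub_dotProduct, dotProduct_sub, dotProduct_sub, hcross,
      dotProduct_comm a p, dotProduct_comm p u]
    ring
  rw [hexp] at h0
  linarith

lemma marg {X : Type*} [Fintype X] {T : ℕ} (P g : X → ℝ) (hP1 : ∑ x, P x = 1)
    (i : Fin T) :
    ∑ xs : Fin T → X, (∏ j, P (xs j)) * g (xs i) = ∑ x, P x * g x := by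
  have h := Fintype.prod_sum (fun (j : Fin T) (x : X) => P x * (if j = i then g x else 1))
  have hL : ∏ j : Fin T, ∑ x : X, P x * (if j = i then g x else 1) = ∑ x, P x * g x := by
    rw [Fintype.prod_eq_single i]
    · simp
    · intro j hj
      simp [if_neg hj, hP1]
  have hR : ∀ xs : Fin T → X,
      (∏ j, P (xs j) * (if j = i then g (xs j) else 1)) = (∏ j, P (xs j)) * g (xs i) := by
    intro xs
    rw [Finset.prod_mul_distrib]
    congr 1
    simp
  calc ∑ xs : Fin T → X, (∏ j, P (xs j)) * g (xs i)
      = ∑ xs : Fin T → X, ∏ j, P (xs j) * (if j = i then g (xs j) else 1) :=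
        Finset.sum_congr rfl fun xs _ => (hR xs).symm
    _ = ∑ x, P x * g x := h.symm.trans hL

lemma total_mass {X : Type*} [Fintype X] {T : ℕ} (P : X → ℝ) (hP1 : ∑ x, P x = 1) :
    ∑ xs : Fin T → X, (∏ j, P (xs j)) = 1 := by
  rw [← Fintype.prod_sum fun (_ : Fin T) (x : X) => P x]
  simp [hP1]

lemma dotProduct_sum' {ι : Type*} (s : Finset ι) (v : Fin N → ℝ) (f : ι → Fin N → ℝ) :
    v ⬝ᵥ (∑ i ∈ s, f i) = ∑ i ∈ s, v ⬝ᵥ f i := by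
  simp only [dotProduct, Finset.sum_apply, Finset.mul_sum]
  rw [Finset.sum_comm]

end Stmt4Aux

open Stmt4Aux in
/-- Jensen-type inequality: `ψ(z)ᵀ G⁻¹ ψ(z) ≤ (T/λ) E[λ ψ(z)ᵀ (Σᵢ ψ(x⁽ⁱ⁾)ψ(x⁽ⁱ⁾)ᵀ + λI)⁻¹ ψ(z)]`,
where `G = Σ_x P(x) ψ(x)ψ(x)ᵀ + (λ/T) I` and the expectation is over `x⁽¹⁾,…,x⁽ᵀ⁾` i.i.d. `∼ P`. -/
theorem stmt_4 {X : Type*} [Fintype X] {N : ℕ} (T : ℕ) (hT : 0 < T)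
    (lam : ℝ) (hlam : 0 < lam)
    (ψ : X → Fin N → ℝ) (P : X → ℝ) (hP0 : ∀ x, 0 ≤ P x) (hP1 : ∑ x, P x = 1)
    (z : X) :
    ψ z ⬝ᵥ ((∑ x, P x • vecMulVec (ψ x) (ψ x) +
        (lam / (T : ℝ)) • (1 : Matrix (Fin N) (Fin N) ℝ))⁻¹ *ᵥ ψ z) ≤
      ((T : ℝ) / lam) * ∑ xs : Fin T → X, (∏ i, P (xs i)) *
        (lam * (ψ z ⬝ᵥ ((∑ i, vecMulVec (ψ (xs i)) (ψ (xs i)) +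
          lam • (1 : Matrix (Fin N) (Fin N) ℝ))⁻¹ *ᵥ ψ z))) := by
  classical
  have hT' : (0:ℝ) < (T:ℝ) := by exact_mod_cast hT
  let G : Matrix (Fin N) (Fin N) ℝ :=
    ∑ x, P x • vecMulVec (ψ x) (ψ x) + (lam / (T : ℝ)) • 1
  let M : (Fin T → X) → Matrix (Fin N) (Fin N) ℝ :=
    fun xs => ∑ i, vecMulVec (ψ (xs i)) (ψ (xs i)) + lam • 1
  let w : (Fin T → X) → ℝ := fun xs => ∏ j, P (xs j)
  have hGpd : G.PosDef := posDef_aux P hP0 ψ _ (div_pos hlam hT')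
  have hMpd : ∀ xs, (M xs).PosDef := by
    intro xs
    have := posDef_aux (fun _ : Fin T => (1:ℝ)) (fun _ => zero_le_one)
      (fun i => ψ (xs i)) lam hlam
    simpa using this
  have hw0 : ∀ xs, 0 ≤ w xs := fun xs => Finset.prod_nonneg fun j _ => hP0 (xs j)
  have hw1 : ∑ xs : Fin T → X, w xs = 1 := total_mass P hP1
  let u : Fin N → ℝ := (T:ℝ)⁻¹ • (G⁻¹ *ᵥ ψ z)
  let L : ℝ := ψ z ⬝ᵥ (G⁻¹ *ᵥ ψ z)
  have hsq : ∀ v : Fin N → ℝ, u ⬝ᵥ (vecMulVec v v *ᵥ u) = (v ⬝ᵥ u)^2 := by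
    intro v
    rw [vecMulVec_mulVec', dotProduct_smul, smul_eq_mul, dotProduct_comm]
    ring
  have hquadM : ∀ xs, u ⬝ᵥ (M xs *ᵥ u) = (∑ i, (ψ (xs i) ⬝ᵥ u)^2) + lam * (u ⬝ᵥ u) := by
    intro xs
    show u ⬝ᵥ ((∑ i, vecMulVec (ψ (xs i)) (ψ (xs i)) + lam • 1) *ᵥ u) = _
    rw [add_mulVec, sum_mulVec', dotProduct_add, dotProduct_sum', smul_mulVec,
      one_mulVec, dotProduct_smul, smul_eq_mul]
    congr 1
    exact Finset.sum_congr rfl fun i _ => hsq (ψ (xs i))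
  have hquadG : u ⬝ᵥ (G *ᵥ u) = (∑ x, P x * (ψ x ⬝ᵥ u)^2) + (lam / (T:ℝ)) * (u ⬝ᵥ u) := by
    show u ⬝ᵥ ((∑ x, P x • vecMulVec (ψ x) (ψ x) + (lam / (T:ℝ)) • 1) *ᵥ u) = _
    rw [add_mulVec, sum_mulVec', dotProduct_add, dotProduct_sum', smul_mulVec,
      one_mulVec, dotProduct_smul, smul_eq_mul]
    congr 1
    refine Finset.sum_congr rfl fun x _ => ?_
    rw [smul_mulVec, dotProduct_smul, smul_eq_mul, hsq (ψ x)]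
  have hGa : G *ᵥ (G⁻¹ *ᵥ ψ z) = ψ z := by
    rw [mulVec_mulVec, Matrix.mul_nonsing_inv _ hGpd.det_pos.ne'.isUnit, one_mulVec]
  have huψ : u ⬝ᵥ ψ z = (T:ℝ)⁻¹ * L := by
    show ((T:ℝ)⁻¹ • (G⁻¹ *ᵥ ψ z)) ⬝ᵥ ψ z = _
    rw [smul_dotProduct, smul_eq_mul, dotProduct_comm]
  have huGu : u ⬝ᵥ (G *ᵥ u) = (T:ℝ)⁻¹ * ((T:ℝ)⁻¹ * L) := by
    show u ⬝ᵥ (G *ᵥ ((T:ℝ)⁻¹ • (G⁻¹ *ᵥ ψ z))) = _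
    rw [mulVec_smul, hGa, dotProduct_smul, smul_eq_mul, huψ]
  have hsumq : ∑ xs : Fin T → X, w xs * (u ⬝ᵥ (M xs *ᵥ u))
      = (T:ℝ) * (∑ x, P x * (ψ x ⬝ᵥ u)^2) + lam * (u ⬝ᵥ u) := by
    calc ∑ xs : Fin T → X, w xs * (u ⬝ᵥ (M xs *ᵥ u))
        = ∑ xs : Fin T → X, ((∑ i, w xs * (ψ (xs i) ⬝ᵥ u)^2) + w xs * (lam * (u ⬝ᵥ u))) := by
          refine Finset.sum_congr rfl fun xs _ => ?_
          rw [hquadM xs, mul_add, Finset.mul_sum]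
      _ = (∑ xs : Fin T → X, ∑ i, w xs * (ψ (xs i) ⬝ᵥ u)^2)
          + (∑ xs : Fin T → X, w xs) * (lam * (u ⬝ᵥ u)) := by
          rw [Finset.sum_add_distrib, Finset.sum_mul]
      _ = (∑ i : Fin T, ∑ xs : Fin T → X, w xs * (ψ (xs i) ⬝ᵥ u)^2) + lam * (u ⬝ᵥ u) := by
          rw [Finset.sum_comm, hw1, one_mul]
      _ = (∑ _i : Fin T, ∑ x, P x * (ψ x ⬝ᵥ u)^2) + lam * (u ⬝ᵥ u) := by
          congr 1
          exact Finset.sum_congr rfl fun i _ => marg P (fun x => (ψ x ⬝ᵥ u)^2) hP1 i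
      _ = (T:ℝ) * (∑ x, P x * (ψ x ⬝ᵥ u)^2) + lam * (u ⬝ᵥ u) := by
          rw [Finset.sum_const, Finset.card_univ, Fintype.card_fin, nsmul_eq_mul]
  have hsumq' : ∑ xs : Fin T → X, w xs * (u ⬝ᵥ (M xs *ᵥ u)) = (T:ℝ) * (u ⬝ᵥ (G *ᵥ u)) := by
    rw [hsumq, hquadG, mul_add]
    congr 1
    field_simp
  have hkey : ∀ xs, 2 * (u ⬝ᵥ ψ z) - u ⬝ᵥ (M xs *ᵥ u) ≤ ψ z ⬝ᵥ ((M xs)⁻¹ *ᵥ ψ z) :=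
    fun xs => key (hMpd xs) (ψ z) u
  have h2 : ∑ xs : Fin T → X, w xs * (2 * (u ⬝ᵥ ψ z) - u ⬝ᵥ (M xs *ᵥ u)) = (T:ℝ)⁻¹ * L := by
    have hsplit : ∑ xs : Fin T → X, w xs * (2 * (u ⬝ᵥ ψ z) - u ⬝ᵥ (M xs *ᵥ u))
        = (∑ xs : Fin T → X, w xs) * (2 * (u ⬝ᵥ ψ z))
          - ∑ xs : Fin T → X, w xs * (u ⬝ᵥ (M xs *ᵥ u)) := by
      rw [Finset.sum_mul, ← Finset.sum_sub_distrib]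
      exact Finset.sum_congr rfl fun xs _ => by ring
    rw [hsplit, hw1, one_mul, hsumq', huGu, huψ]
    field_simp
    ring
  have hmain : L ≤ (T:ℝ) * ∑ xs : Fin T → X, w xs * (ψ z ⬝ᵥ ((M xs)⁻¹ *ᵥ ψ z)) := by
    have h1 : ∑ xs : Fin T → X, w xs * (2 * (u ⬝ᵥ ψ z) - u ⬝ᵥ (M xs *ᵥ u))
        ≤ ∑ xs : Fin T → X, w xs * (ψ z ⬝ᵥ ((M xs)⁻¹ *ᵥ ψ z)) :=
      Finset.sum_le_sum fun xs _ => mul_le_mul_of_nonneg_left (hkey xs) (hw0 xs)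
    calc L = (T:ℝ) * ((T:ℝ)⁻¹ * L) := by field_simp
      _ ≤ (T:ℝ) * ∑ xs : Fin T → X, w xs * (ψ z ⬝ᵥ ((M xs)⁻¹ *ᵥ ψ z)) := by
          refine mul_le_mul_of_nonneg_left ?_ hT'.le
          rw [← h2]; exact h1
  have hrhs : ((T:ℝ)/lam) * ∑ xs : Fin T → X, w xs * (lam * (ψ z ⬝ᵥ ((M xs)⁻¹ *ᵥ ψ z)))
      = (T:ℝ) * ∑ xs : Fin T → X, w xs * (ψ z ⬝ᵥ ((M xs)⁻¹ *ᵥ ψ z)) := by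
    have : ∑ xs : Fin T → X, w xs * (lam * (ψ z ⬝ᵥ ((M xs)⁻¹ *ᵥ ψ z)))
        = lam * ∑ xs : Fin T → X, w xs * (ψ z ⬝ᵥ ((M xs)⁻¹ *ᵥ ψ z)) := by
      rw [Finset.mul_sum]
      exact Finset.sum_congr rfl fun xs _ => by ring
    rw [this]
    field_simp
  show L ≤ ((T:ℝ)/lam) * ∑ xs : Fin T → X, w xs * (lam * (ψ z ⬝ᵥ ((M xs)⁻¹ *ᵥ ψ z)))
  rw [hrhs]
  exact hmain
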